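/- Let ν > 0 and t ∈ (0, T] with T > 0 and let N ∈ ℕ. Then (1/√t) · ∑_{k=1}^{N} (1 - exp(-ν π² k² t))² / (ν π² k²) ≤ 1/(π √ν) + 1/(ν π²) + 4 π √ν. -/

import Mathlib

open Real in
theorem stmt_5 (ν T t : ℝ) (hν : 0 < ν) (hT : 0 < T) (ht : t ∈ Set.Ioc 0 T) (N : ℕ) :
    (1 / Real.sqrt t) *
        ∑ k ∈ Finset.Icc 1 N,
          (1 - Real.exp (-(ν * π ^ 2 * k ^ 2 * t))) ^ 2 / (ν * π ^ 2 * k ^ 2) ≤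
      1 / (π * Real.sqrt ν) + 1 / (ν * π ^ 2) + 4 * π * Real.sqrt ν := by
  obtain ⟨ht0, htT⟩ := ht
  have hπ := Real.pi_pos
  have ha : (0:ℝ) < ν * π ^ 2 := by positivity
  set s : ℝ := Real.sqrt (ν * π ^ 2 * t) with hs
  have hs0 : 0 < s := Real.sqrt_pos.mpr (by positivity)
  have hs2 : s ^ 2 = ν * π ^ 2 * t := Real.sq_sqrt (by positivity)
  set K : ℕ := ⌊1 / s⌋₊ with hK
  have hKle : (K : ℝ) ≤ 1 / s := Nat.floor_le (by positivity)
  have hKlt : 1 / s < (K : ℝ) + 1 := Nat.lt_floor_add_one _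
  have hinvK : ((K : ℝ) + 1)⁻¹ ≤ s := by
    rw [inv_le_comm₀ (by positivity) hs0, ← one_div]
    exact hKlt.le
  -- per-term bound
  have hterm : ∀ k ∈ Finset.Icc 1 N,
      (1 - Real.exp (-(ν * π ^ 2 * k ^ 2 * t))) ^ 2 / (ν * π ^ 2 * k ^ 2) ≤
        (if k ≤ K then t else (ν * π ^ 2 * (k:ℝ) ^ 2)⁻¹) := by
    intro k hk
    have hk1 : 1 ≤ k := (Finset.mem_Icc.mp hk).1
    have hk1' : (1:ℝ) ≤ (k:ℝ) := by exact_mod_cast hk1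
    have hkpos : (0:ℝ) < ν * π ^ 2 * (k:ℝ) ^ 2 := by positivity
    set y : ℝ := ν * π ^ 2 * (k:ℝ) ^ 2 * t with hy
    have hy0 : 0 ≤ y := by positivity
    have he1 : 1 - Real.exp (-y) ≤ 1 := by
      have := Real.exp_pos (-y); linarith
    have he0 : 0 ≤ 1 - Real.exp (-y) := by
      have : Real.exp (-y) ≤ 1 := Real.exp_le_one_iff.mpr (by linarith)
      linarith
    have hey : 1 - Real.exp (-y) ≤ y := by
      have := Real.add_one_le_exp (-y); linarith
    by_cases hkK : k ≤ K
    · simp only [hkK, if_true]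
      rw [div_le_iff₀ hkpos]
      calc (1 - Real.exp (-y)) ^ 2 ≤ y * 1 := by
            rw [sq]; exact mul_le_mul hey he1 he0 hy0
        _ = t * (ν * π ^ 2 * (k:ℝ) ^ 2) := by rw [hy]; ring
    · simp only [hkK, if_false]
      rw [div_le_iff₀ hkpos, inv_mul_cancel₀ hkpos.ne']
      calc (1 - Real.exp (-y)) ^ 2 ≤ 1 ^ 2 := by
            exact pow_le_pow_left₀ he0 he1 2
        _ = 1 := one_pow 2
    -- done
  have hsum1 : ∑ k ∈ Finset.Icc 1 N,
      (1 - Real.exp (-(ν * π ^ 2 * k ^ 2 * t))) ^ 2 / (ν * π ^ 2 * k ^ 2) ≤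
      ∑ k ∈ Finset.Icc 1 N, (if k ≤ K then t else (ν * π ^ 2 * (k:ℝ) ^ 2)⁻¹) :=
    Finset.sum_le_sum hterm
  -- split the if sum
  have hsplit : ∑ k ∈ Finset.Icc 1 N, (if k ≤ K then t else (ν * π ^ 2 * (k:ℝ) ^ 2)⁻¹)
      ≤ (K : ℝ) * t + (ν * π ^ 2)⁻¹ * (2 / ((K:ℝ) + 1)) := by
    rw [Finset.sum_ite]
    gcongr ?_ + ?_
    · rw [Finset.sum_const, nsmul_eq_mul]
      have hcard : ((Finset.Icc 1 N).filter (fun k => k ≤ K)).card ≤ K := by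
        have hsub : (Finset.Icc 1 N).filter (fun k => k ≤ K) ⊆ Finset.Icc 1 K := by
          intro x hx
          simp only [Finset.mem_filter, Finset.mem_Icc] at hx ⊢
          exact ⟨hx.1.1, hx.2⟩
        calc ((Finset.Icc 1 N).filter (fun k => k ≤ K)).card
            ≤ (Finset.Icc 1 K).card := Finset.card_le_card hsub
          _ = K := by rw [Nat.card_Icc]; omega
      exact mul_le_mul_of_nonneg_right (by exact_mod_cast hcard) ht0.le
    · have hsub : (Finset.Icc 1 N).filter (fun k => ¬ k ≤ K) ⊆ Finset.Ioo K (N+1) := by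
        intro x hx
        simp only [Finset.mem_filter, Finset.mem_Icc, Finset.mem_Ioo] at hx ⊢
        omega
      calc ∑ k ∈ (Finset.Icc 1 N).filter (fun k => ¬ k ≤ K), (ν * π ^ 2 * (k:ℝ) ^ 2)⁻¹
          ≤ ∑ k ∈ Finset.Ioo K (N+1), (ν * π ^ 2 * (k:ℝ) ^ 2)⁻¹ := by
            apply Finset.sum_le_sum_of_subset_of_nonneg hsub
            intro i _ _; positivity
        _ = (ν * π ^ 2)⁻¹ * ∑ k ∈ Finset.Ioo K (N+1), ((k:ℝ) ^ 2)⁻¹ := by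
            rw [Finset.mul_sum]
            apply Finset.sum_congr rfl
            intro k _
            rw [mul_inv]
        _ ≤ (ν * π ^ 2)⁻¹ * (2 / ((K:ℝ) + 1)) := by
            gcongr
            exact sum_Ioo_inv_sq_le K (N+1)
  -- combine
  have hut : Real.sqrt t > 0 := Real.sqrt_pos.mpr ht0
  have hut2 : Real.sqrt t ^ 2 = t := Real.sq_sqrt ht0.le
  have hsν : Real.sqrt ν > 0 := Real.sqrt_pos.mpr hν
  have hsν2 : Real.sqrt ν ^ 2 = ν := Real.sq_sqrt hν.le
  have hseq : s = π * Real.sqrt ν * Real.sqrt t := by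
    rw [hs]
    rw [show ν * π ^ 2 * t = (π * Real.sqrt ν * Real.sqrt t) ^ 2 by
      rw [mul_pow, mul_pow, hsν2, hut2]; ring]
    exact Real.sqrt_sq (by positivity)
  have hmain : (1 / Real.sqrt t) * ((K : ℝ) * t + (ν * π ^ 2)⁻¹ * (2 / ((K:ℝ) + 1)))
      ≤ 3 / (π * Real.sqrt ν) := by
    have h1 : (K : ℝ) * t ≤ Real.sqrt t / (π * Real.sqrt ν) := by
      calc (K : ℝ) * t ≤ (1 / s) * t := mul_le_mul_of_nonneg_right hKle ht0.le
        _ = Real.sqrt t / (π * Real.sqrt ν) := by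
            rw [hseq]
            field_simp
            nlinarith [hut2, hut.le]
    have h2 : (ν * π ^ 2)⁻¹ * (2 / ((K:ℝ) + 1)) ≤ 2 * Real.sqrt t / (π * Real.sqrt ν) := by
      have : 2 / ((K:ℝ) + 1) ≤ 2 * s := by
        rw [div_le_iff₀ (by positivity)]
        calc (2:ℝ) = 2 * (((K:ℝ)+1)⁻¹ * ((K:ℝ)+1)) := by
              rw [inv_mul_cancel₀ (by positivity)]; ring
          _ ≤ 2 * (s * ((K:ℝ)+1)) := by
              gcongr
          _ = 2 * s * ((K:ℝ)+1) := by ring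
      calc (ν * π ^ 2)⁻¹ * (2 / ((K:ℝ) + 1)) ≤ (ν * π ^ 2)⁻¹ * (2 * s) := by
            gcongr
        _ = 2 * Real.sqrt t / (π * Real.sqrt ν) := by
            rw [hseq]
            rw [show ν * π ^ 2 = (π * Real.sqrt ν) ^ 2 by rw [mul_pow, hsν2]; ring]
            field_simp
    calc (1 / Real.sqrt t) * ((K : ℝ) * t + (ν * π ^ 2)⁻¹ * (2 / ((K:ℝ) + 1)))
        ≤ (1 / Real.sqrt t) * (Real.sqrt t / (π * Real.sqrt ν)
            + 2 * Real.sqrt t / (π * Real.sqrt ν)) := by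
          gcongr
      _ = 3 / (π * Real.sqrt ν) := by
          field_simp
          ring
  have hfinal : (3:ℝ) / (π * Real.sqrt ν) ≤
      1 / (π * Real.sqrt ν) + 1 / (ν * π ^ 2) + 4 * π * Real.sqrt ν := by
    have key : 2 / (π * Real.sqrt ν) ≤ 1 / (ν * π ^ 2) + 4 * π * Real.sqrt ν := by
      rw [div_le_iff₀ (by positivity)]
      have hu : (0:ℝ) < π * Real.sqrt ν := by positivity
      set u := π * Real.sqrt ν with hudef
      have hνu : ν * π ^ 2 = u ^ 2 := by rw [hudef, mul_pow, hsν2]; ring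
      rw [hνu]
      have h4 : 4 * π * Real.sqrt ν = 4 * u := by rw [hudef]; ring
      rw [h4]
      have hpoly : 0 ≤ 4 * u ^ 3 - 2 * u + 1 := by
        nlinarith [mul_nonneg hu.le (sq_nonneg (2*u - 1)), sq_nonneg (2*u - 3/4)]
      have h5 : (1 / u ^ 2 + 4 * u) * u = 1/u + 4 * u^2 := by
        field_simp
      rw [h5]
      have h6 : 1/u + 4*u^2 - 2 = (4*u^3 - 2*u + 1)/u := by field_simp; ring
      linarith [div_nonneg hpoly hu.le, h6 ▸ div_nonneg hpoly hu.le]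
    have h7 : 3/(π*Real.sqrt ν) = 1/(π*Real.sqrt ν) + 2/(π*Real.sqrt ν) := by ring
    linarith
  have hnn : 0 ≤ (1 / Real.sqrt t) := by positivity
  calc (1 / Real.sqrt t) *
        ∑ k ∈ Finset.Icc 1 N,
          (1 - Real.exp (-(ν * π ^ 2 * k ^ 2 * t))) ^ 2 / (ν * π ^ 2 * k ^ 2)
      ≤ (1 / Real.sqrt t) * ((K : ℝ) * t + (ν * π ^ 2)⁻¹ * (2 / ((K:ℝ) + 1))) := by
        exact mul_le_mul_of_nonneg_left (le_trans hsum1 hsplit) hnn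
    _ ≤ 3 / (π * Real.sqrt ν) := hmain
    _ ≤ _ := hfinal
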